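/- Let A be a Banach algebra with a left approximate identity and φ a non-zero multiplicative linear functional on A. Then the bidual A** (with the first Arens product) is left φ̃-biflat if and only if A is left φ-biflat. -/

import Mathlib

/-!
We realize the bidual `(B ⊗_p B)**` of the projective tensor product of a Banach algebra `B`
with itself canonically as the dual of the Banach space `B →L[ℂ] B* ` of bounded bilinear
forms on `B` (the latter being isometrically isomorphic to `(B ⊗_p B)*`).  All the canonical
Banach `B`-bimodule actions are spelled out explicitly through this identification.
The multiplication of the Banach algebra `B` is encoded as a bounded bilinear map
`μ : B →L[ℂ] B →L[ℂ] B` (for a Banach algebra `A`, `μ = ContinuousLinearMap.mul ℂ A`).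
-/

noncomputable section

open ContinuousLinearMap NormedSpace

/-- The topological dual `E →L[𝕜] 𝕜` of a normed space, under its older Mathlib name
`NormedSpace.Dual` (removed since in favour of `StrongDual`, which is the same type). -/
def NormedSpace.Dual (𝕜 : Type*) [NontriviallyNormedField 𝕜] (E : Type*)
    [SeminormedAddCommGroup E] [NormedSpace 𝕜 E] : Type _ :=
  E →L[𝕜] 𝕜

instance (𝕜 : Type*) [NontriviallyNormedField 𝕜] (E : Type*) [NormedAddCommGroup E]
    [NormedSpace 𝕜 E] : NormedAddCommGroup (NormedSpace.Dual 𝕜 E) :=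
  inferInstanceAs (NormedAddCommGroup (E →L[𝕜] 𝕜))

instance (𝕜 : Type*) [NontriviallyNormedField 𝕜] (E : Type*) [NormedAddCommGroup E]
    [NormedSpace 𝕜 E] : NormedSpace 𝕜 (NormedSpace.Dual 𝕜 E) :=
  inferInstanceAs (NormedSpace 𝕜 (E →L[𝕜] 𝕜))

instance (𝕜 : Type*) [NontriviallyNormedField 𝕜] (E : Type*) [NormedAddCommGroup E]
    [NormedSpace 𝕜 E] : Module 𝕜 (NormedSpace.Dual 𝕜 E) :=
  inferInstanceAs (Module 𝕜 (E →L[𝕜] 𝕜))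

instance (𝕜 : Type*) [NontriviallyNormedField 𝕜] (E : Type*) [NormedAddCommGroup E]
    [NormedSpace 𝕜 E] : FunLike (NormedSpace.Dual 𝕜 E) E 𝕜 :=
  inferInstanceAs (FunLike (E →L[𝕜] 𝕜) E 𝕜)

instance (𝕜 : Type*) [NontriviallyNormedField 𝕜] (E : Type*) [NormedAddCommGroup E]
    [NormedSpace 𝕜 E] : ContinuousLinearMapClass (NormedSpace.Dual 𝕜 E) 𝕜 E 𝕜 :=
  inferInstanceAs (ContinuousLinearMapClass (E →L[𝕜] 𝕜) 𝕜 E 𝕜)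

/-- The space of bounded bilinear forms on `B`, canonically the dual of the projective
tensor product `B ⊗_p B`. -/
abbrev BilForm (B : Type*) [NormedAddCommGroup B] [NormedSpace ℂ B] : Type _ :=
  B →L[ℂ] Dual ℂ B

/-- The bidual of the projective tensor product `B ⊗_p B`, realized canonically as the dual of
the Banach space of bounded bilinear forms on `B`. -/
abbrev TensorBidual (B : Type*) [NormedAddCommGroup B] [NormedSpace ℂ B] : Type _ :=
  Dual ℂ (BilForm B)

/-- The bidual `B**` of a normed space `B`. -/
abbrev Bidual (B : Type*) [NormedAddCommGroup B] [NormedSpace ℂ B] : Type _ :=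
  Dual ℂ (Dual ℂ B)

variable {B : Type*} [NormedAddCommGroup B] [NormedSpace ℂ B]

/-- The left action of `a ∈ B` (with multiplication `μ`) on `(B ⊗_p B)**`:
`(a • T) β = T ((x, y) ↦ β (a x, y))`, the canonical bidual extension of the
`B`-bimodule action `a • (x ⊗ y) = (a x) ⊗ y` on `B ⊗_p B`. -/
def tensorLSmul (μ : B →L[ℂ] B →L[ℂ] B) (a : B) (T : TensorBidual B) : TensorBidual B :=
  T.comp ((compL ℂ B B (Dual ℂ B)).flip (μ a))

/-- The right action of `a ∈ B` on `(B ⊗_p B)**`: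
`(T • a) β = T ((x, y) ↦ β (x, y a))`, the canonical bidual extension of the
`B`-bimodule action `(x ⊗ y) • a = x ⊗ (y a)` on `B ⊗_p B`. -/
def tensorRSmul (μ : B →L[ℂ] B →L[ℂ] B) (T : TensorBidual B) (a : B) : TensorBidual B :=
  T.comp (compL ℂ B (Dual ℂ B) (Dual ℂ B) ((compL ℂ B B ℂ).flip (μ.flip a)))

/-- `π_B^* ψ`, the image of a functional `ψ ∈ B*` under the adjoint of the product
morphism `π_B : B ⊗_p B → B`; as a bilinear form it is `(x, y) ↦ ψ (x y)`.  Thus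
`π_B** T ψ = T (piDual μ ψ)` for `T ∈ (B ⊗_p B)**`. -/
def piDual (μ : B →L[ℂ] B →L[ℂ] B) (ψ : Dual ℂ B) : BilForm B :=
  (compL ℂ B B ℂ ψ).comp μ

/-- The left action of `a ∈ B` on the bidual `B**`: `(a • m) f = m (f ∘ (a * ·))`. -/
def bidualLSmul (μ : B →L[ℂ] B →L[ℂ] B) (a : B) (m : Bidual B) : Bidual B :=
  m.comp ((compL ℂ B B ℂ).flip (μ a))

/-- A Banach algebra `B` (with multiplication `μ` and a multiplicative functional `ψ`) is
*left `ψ`-biflat* if there is a bounded linear map `ρ : B → (B ⊗_p B)**` with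
`ρ (a b) = ψ (b) ρ (a) = a • ρ (b)` for all `a, b ∈ B`, and `ψ̃ ∘ π_B** ∘ ρ = ψ`
(note `(ψ̃ ∘ π_B**) T = T (piDual μ ψ)`). -/
def IsLeftBiflat (μ : B →L[ℂ] B →L[ℂ] B) (ψ : Dual ℂ B) : Prop :=
  ∃ ρ : B →L[ℂ] TensorBidual B,
    (∀ a b : B, ρ (μ a b) = ψ b • ρ a ∧ ρ (μ a b) = tensorLSmul μ a (ρ b)) ∧
    ∀ a : B, ρ a (piDual μ ψ) = ψ a

/-- A Banach algebra `B` is *left `ψ`-amenable* if there is `m ∈ B**` with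
`a • m = ψ (a) m` for all `a ∈ B` and `ψ̃ (m) = m (ψ) = 1`. -/
def IsLeftAmenable (μ : B →L[ℂ] B →L[ℂ] B) (ψ : Dual ℂ B) : Prop :=
  ∃ m : Bidual B, (∀ (a : B) (f : Dual ℂ B), m (f.comp (μ a)) = ψ a * m f) ∧ m ψ = 1

/-- Auxiliary map for the first Arens product: `arensAux μ f a = f · a`, where
`(f · a) (b) = f (a b)`. -/
def arensAux (μ : B →L[ℂ] B →L[ℂ] B) : Dual ℂ B →L[ℂ] (B →L[ℂ] Dual ℂ B) :=
  ((compL ℂ B (B →L[ℂ] B) (Dual ℂ B)).flip μ).comp (compL ℂ B B ℂ)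

/-- Second auxiliary map for the first Arens product: `arensAux₂ μ n f = n · f`, where
`(n · f) (a) = n (f · a)`. -/
def arensAux₂ (μ : B →L[ℂ] B →L[ℂ] B) : Bidual B →L[ℂ] (Dual ℂ B →L[ℂ] Dual ℂ B) :=
  ((compL ℂ (Dual ℂ B) (B →L[ℂ] Dual ℂ B) (Dual ℂ B)).flip (arensAux μ)).comp
    (compL ℂ B (Dual ℂ B) ℂ)

/-- The *first Arens product* on the bidual `B**` of a Banach algebra `B` with
multiplication `μ`: `(m □ n) (f) = m (n · f)`, where `(n · f) (a) = n (f · a)` and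
`(f · a) (b) = f (a b)`. -/
def arens (μ : B →L[ℂ] B →L[ℂ] B) : Bidual B →L[ℂ] Bidual B →L[ℂ] Bidual B :=
  ((compL ℂ (Bidual B) (Dual ℂ B →L[ℂ] Dual ℂ B) (Bidual B)).flip (arensAux₂ μ)).comp
    (compL ℂ (Dual ℂ B) (Dual ℂ B) ℂ)

/-- `ψ̃`, the canonical extension of a functional `ψ ∈ B*` to a functional on `B**`
(given by `ψ̃ (m) = m (ψ)`); if `ψ` is a character of `B`, this is the unique extension of
`ψ` to a character of `B**` with the first Arens product. -/
def charExt (ψ : Dual ℂ B) : Dual ℂ (Bidual B) :=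
  ContinuousLinearMap.apply ℂ ℂ ψ

variable {A : Type*} [NonUnitalNormedRing A] [NormedSpace ℂ A]
  [IsScalarTower ℂ A A] [SMulCommClass ℂ A A] [CompleteSpace A]


@[ext] theorem dualExtAux {E : Type*} [NormedAddCommGroup E] [NormedSpace ℂ E]
    {f g : Dual ℂ E} (h : ∀ x, f x = g x) : f = g :=
  ContinuousLinearMap.ext h

instance instContinuousSMulTensorBidualAux (E : Type*) [NormedAddCommGroup E] [NormedSpace ℂ E] :
    ContinuousSMul ℂ (TensorBidual E) :=
  inferInstanceAs (ContinuousSMul ℂ (BilForm E →L[ℂ] ℂ))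

set_option maxHeartbeats 1000000
set_option synthInstance.maxHeartbeats 400000

section Helpers

open ContinuousLinearMap NormedSpace Filter

variable {B : Type*} [NormedAddCommGroup B] [NormedSpace ℂ B]

@[simp] lemma charExt_apply' (ψ : Dual ℂ B) (m : Bidual B) : charExt ψ m = m ψ := rfl

@[simp] lemma tensorLSmul_apply' (μ : B →L[ℂ] B →L[ℂ] B) (a : B) (T : TensorBidual B)
    (β : BilForm B) : tensorLSmul μ a T β = T (β.comp (μ a)) := rfl

@[simp] lemma piDual_apply' (μ : B →L[ℂ] B →L[ℂ] B) (ψ : Dual ℂ B) (x : B) :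
    piDual μ ψ x = ψ.comp (μ x) := rfl

@[simp] lemma arensAux_apply' (μ : B →L[ℂ] B →L[ℂ] B) (f : Dual ℂ B) (a : B) :
    arensAux μ f a = f.comp (μ a) := rfl

@[simp] lemma arensAux₂_apply' (μ : B →L[ℂ] B →L[ℂ] B) (n : Bidual B) (f : Dual ℂ B) (a : B) :
    arensAux₂ μ n f a = n (f.comp (μ a)) := rfl

@[simp] lemma arens_apply' (μ : B →L[ℂ] B →L[ℂ] B) (m n : Bidual B) (f : Dual ℂ B) :
    arens μ m n f = m (arensAux₂ μ n f) := rfl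

lemma char_comp_mu (μ : B →L[ℂ] B →L[ℂ] B) (ψ : Dual ℂ B)
    (hmul : ∀ a b : B, ψ (μ a b) = ψ a * ψ b) (a : B) :
    ψ.comp (μ a) = ψ a • ψ := by
  ext b; exact hmul a b

lemma arensAux₂_char (μ : B →L[ℂ] B →L[ℂ] B) (ψ : Dual ℂ B)
    (hmul : ∀ a b : B, ψ (μ a b) = ψ a * ψ b) (n : Bidual B) :
    arensAux₂ μ n ψ = n ψ • ψ := by
  ext a
  show n (ψ.comp (μ a)) = n ψ * ψ a
  rw [char_comp_mu μ ψ hmul a, map_smul, smul_eq_mul, mul_comm]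

lemma charExt_mul (μ : B →L[ℂ] B →L[ℂ] B) (ψ : Dual ℂ B)
    (hmul : ∀ a b : B, ψ (μ a b) = ψ a * ψ b) (m n : Bidual B) :
    charExt ψ (arens μ m n) = charExt ψ m * charExt ψ n := by
  simp [arensAux₂_char μ ψ hmul n, mul_comm]

/-- Left `ψ`-amenability implies left `ψ`-biflatness when `ψ` is multiplicative. -/
lemma amenable_to_biflat (μ : B →L[ℂ] B →L[ℂ] B) (ψ : Dual ℂ B)
    (hmul : ∀ a b : B, ψ (μ a b) = ψ a * ψ b)
    (h : IsLeftAmenable μ ψ) : IsLeftBiflat μ ψ := by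
  obtain ⟨m, hinv, hone⟩ := h
  -- the "diagonal" m ⊗ m ∈ (B ⊗ B)**
  set T : TensorBidual B := m.comp (compL ℂ B (Dual ℂ B) ℂ m) with hT
  have hTapp : ∀ β : BilForm B, T β = m (m.comp β) := fun _ => rfl
  refine ⟨ψ.smulRight T, ?_, ?_⟩
  · intro a b
    constructor
    · show ψ (μ a b) • T = ψ b • (ψ a • T)
      rw [hmul a b, smul_smul, mul_comm]
    · ext β
      show ψ (μ a b) * m (m.comp β) = ψ b * m (m.comp (β.comp (μ a)))
      rw [hmul a b]
      have : m.comp (β.comp (μ a)) = (m.comp β).comp (μ a) := rfl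
      rw [this, hinv a (m.comp β)]
      ring
  · intro a
    have hcomp : m.comp (piDual μ ψ) = ψ := by
      ext x
      show m (ψ.comp (μ x)) = ψ x
      rw [hinv x ψ, hone, mul_one]
    show ψ a * m (m.comp (piDual μ ψ)) = ψ a
    rw [hcomp, hone, mul_one]

/-- Left `ψ`-amenability of `B` passes to the bidual with the first Arens product. -/
lemma amenable_to_bidual_amenable (μ : B →L[ℂ] B →L[ℂ] B) (ψ : Dual ℂ B)
    (h : IsLeftAmenable μ ψ) : IsLeftAmenable (B := Bidual B) (arens μ) (charExt ψ) := by
  obtain ⟨m, hinv, hone⟩ := h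
  refine ⟨inclusionInDoubleDual ℂ (Bidual B) m, ?_, ?_⟩
  · intro n F
    have key : arens μ n m = n ψ • m := by
      ext f
      have h' : arensAux₂ μ m f = m f • ψ := by
        ext a
        show m (f.comp (μ a)) = m f * ψ a
        rw [hinv a f, mul_comm]
      show n (arensAux₂ μ m f) = n ψ * m f
      rw [h', map_smul, smul_eq_mul, mul_comm]
    show F (arens μ n m) = charExt ψ n * F m
    rw [key, map_smul, charExt_apply', smul_eq_mul]
  · exact hone

/-- Left `φ̃`-biflatness of the bidual implies left `φ`-biflatness, by restriction along
the canonical embedding and the canonical extension of bilinear forms. -/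
lemma bidual_biflat_to_biflat (μ : B →L[ℂ] B →L[ℂ] B) (ψ : Dual ℂ B)
    (hmul : ∀ a b : B, ψ (μ a b) = ψ a * ψ b)
    (h : IsLeftBiflat (B := Bidual B) (arens μ) (charExt ψ)) : IsLeftBiflat μ ψ := by
  obtain ⟨ρ', hρ'1, hρ'2⟩ := h
  set ι : B →L[ℂ] Bidual B := inclusionInDoubleDual ℂ B with hι
  -- canonical extension of bilinear forms on B to bilinear forms on B**
  set ext : BilForm B →L[ℂ] BilForm (Bidual B) :=
    ((compL ℂ (Bidual B) (Dual ℂ B) ℂ).flip).comp ((compL ℂ B (Dual ℂ B) ℂ).flip) with hext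
  have hextapp : ∀ (β : BilForm B) (n m' : Bidual B), ext β n m' = n (m'.comp β) :=
    fun _ _ _ => rfl
  set ρ : B →L[ℂ] TensorBidual B :=
    ((compL ℂ (BilForm B) (BilForm (Bidual B)) ℂ).flip ext).comp (ρ'.comp ι) with hρdef
  have hρapp : ∀ (a : B) (β : BilForm B), ρ a β = ρ' (ι a) (ext β) := fun _ _ => rfl
  have hιmul : ∀ a b : B, ι (μ a b) = arens μ (ι a) (ι b) := by
    intro a b
    ext f
    rfl
  refine ⟨ρ, ?_, ?_⟩
  · intro a b
    constructor
    · ext β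
      rw [hρapp, hιmul a b, (hρ'1 (ι a) (ι b)).1]
      rfl
    · ext β
      rw [hρapp, hιmul a b, (hρ'1 (ι a) (ι b)).2, tensorLSmul_apply', tensorLSmul_apply',
        hρapp]
      rfl
  · intro a
    have hkey : ext (piDual μ ψ) = piDual (arens μ) (charExt ψ) := by
      ext n m'
      have h1 : m'.comp (piDual μ ψ) = m' ψ • ψ := by
        ext x
        show m' (ψ.comp (μ x)) = m' ψ * ψ x
        rw [char_comp_mu μ ψ hmul x, map_smul, smul_eq_mul, mul_comm]
      rw [hextapp, h1]
      show n (m' ψ • ψ) = n (arensAux₂ μ m' ψ)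
      rw [arensAux₂_char μ ψ hmul m']
    rw [hρapp, hkey, hρ'2 (ι a), charExt_apply']; rfl

end Helpers

section MainHelpers

open ContinuousLinearMap NormedSpace Filter

variable {A : Type*} [NonUnitalNormedRing A] [NormedSpace ℂ A]
  [IsScalarTower ℂ A A] [SMulCommClass ℂ A A] [CompleteSpace A]

abbrev tbFunLikeAux : FunLike (TensorBidual A) (BilForm A) ℂ := instFunLikeDual ℂ (BilForm A)

abbrev tbTopAux : TopologicalSpace (TensorBidual A) :=
  (instNormedAddCommGroupDual ℂ (BilForm A)).toUniformSpace.toTopologicalSpace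

attribute [local instance] tbFunLikeAux tbTopAux

/-- With a left approximate identity, left `φ`-biflatness implies left `φ`-amenability. -/
lemma biflat_to_amenable (φ : A →L[ℂ] ℂ) (hφ_ne : φ ≠ 0)
    (hlai : ∃ l : Filter A, l.NeBot ∧ ∀ a : A, Filter.Tendsto (fun e => e * a) l (nhds a))
    (h : IsLeftBiflat (ContinuousLinearMap.mul ℂ A) φ) :
    IsLeftAmenable (ContinuousLinearMap.mul ℂ A) φ := by
  set μ := ContinuousLinearMap.mul ℂ A with hμ
  obtain ⟨ρ, h1, h2⟩ := h
  obtain ⟨l, hl, hlim⟩ := hlai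
  obtain ⟨c, hc⟩ : ∃ c : A, φ c ≠ 0 := by
    by_contra hcon
    push_neg at hcon
    exact hφ_ne (ContinuousLinearMap.ext fun x => by simp [hcon x])
  set a₀ : A := (φ c)⁻¹ • c with ha₀
  have hφa₀ : φ a₀ = 1 := by rw [ha₀, map_smul, smul_eq_mul, inv_mul_cancel₀ hc]
  -- λ_f b = ρ b (piDual μ f)
  have hlam : ∀ (f : Dual ℂ A) (a b : A), ρ (a * b) (piDual μ f) = φ b * ρ a (piDual μ f) := by
    intro f a b
    have := (h1 a b).1
    rw [show μ a b = a * b from rfl] at this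
    rw [this]; rfl
  have hlam_eq : ∀ (f : Dual ℂ A) (a : A),
      ρ a (piDual μ f) = φ a * ρ a₀ (piDual μ f) := by
    intro f a
    have hcont : Continuous fun b : A => ρ b (piDual μ f) :=
      ((ContinuousLinearMap.apply ℂ ℂ (piDual μ f)).comp ρ).continuous
    have t1 : Tendsto (fun e : A => ρ (e * a) (piDual μ f)) l (nhds (ρ a (piDual μ f))) :=
      (hcont.tendsto a).comp (hlim a)
    have t2 : Tendsto (fun e : A => ρ (e * a) (piDual μ f)) l
        (nhds (φ a * ρ a₀ (piDual μ f))) := by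
      have heq : (fun e : A => ρ (e * a) (piDual μ f)) =
          fun e : A => φ a * ρ (e * a₀) (piDual μ f) := by
        funext e
        rw [hlam f e a, hlam f e a₀, hφa₀, one_mul]
      rw [heq]
      exact (((hcont.tendsto a₀).comp (hlim a₀)).const_mul (φ a))
    exact tendsto_nhds_unique t1 t2
  refine ⟨(ρ a₀).comp (arensAux μ), ?_, ?_⟩
  · intro a f
    have hpi : arensAux μ (f.comp (μ a)) = (arensAux μ f).comp (μ a) := by
      ext x y
      show f (a * (x * y)) = f ((a * x) * y)
      rw [mul_assoc]
    have hpi' : ∀ g : Dual ℂ A, arensAux μ g = piDual μ g := fun g => rfl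
    show ρ a₀ (arensAux μ (f.comp (μ a))) = φ a * ρ a₀ (arensAux μ f)
    rw [hpi, hpi', ← tensorLSmul_apply' μ a (ρ a₀) (piDual μ f), ← (h1 a a₀).2,
      show μ a a₀ = a * a₀ from rfl, hlam f a a₀, hφa₀, one_mul, hlam_eq f a]
  · show ρ a₀ (arensAux μ φ) = 1
    rw [show arensAux μ φ = piDual μ φ from rfl, h2 a₀]; exact hφa₀

end MainHelpers

/-- Theorem 2.2: if a Banach algebra `A` has a left approximate identity
(a net `(e_α)` with `e_α a → a` in norm for every `a ∈ A`, encoded by a filter), then the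
bidual `A**`, equipped with the first Arens product, is left `φ̃`-biflat if and only if `A`
is left `φ`-biflat. -/
theorem bidual_left_phi_biflat_iff_left_phi_biflat
    (φ : A →L[ℂ] ℂ) (hφ_ne : φ ≠ 0)
    (hφ_mul : ∀ a b : A, φ (a * b) = φ a * φ b)
    (hlai : ∃ l : Filter A, l.NeBot ∧ ∀ a : A, Filter.Tendsto (fun e => e * a) l (nhds a)) :
    IsLeftBiflat (B := Bidual A) (arens (ContinuousLinearMap.mul ℂ A)) (charExt φ) ↔
      IsLeftBiflat (ContinuousLinearMap.mul ℂ A) φ := by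
  constructor
  · intro h
    apply bidual_biflat_to_biflat
    · intro a b; exact hφ_mul a b
    · exact h
  · intro h
    have ham : IsLeftAmenable (ContinuousLinearMap.mul ℂ A) φ :=
      biflat_to_amenable φ hφ_ne hlai h
    apply amenable_to_biflat
    · intro p q
      apply charExt_mul
      intro a b; exact hφ_mul a b
    · apply amenable_to_bidual_amenable
      exact ham
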